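/- If G is a finitely generated nilpotent group, then the torsion elements of G form a finite subgroup of G. -/

import Mathlib

open Subgroup
open scoped commutatorElement

section Helpers

variable {G : Type*} [Group G]

/-- A subgroup of a finitely generated commutative group is finitely generated. -/
lemma my_subgroup_fg_of_comm_fg {A : Type*} [CommGroup A] [Group.FG A] (H : Subgroup A) :
    Group.FG H := by
  rw [Group.fg_iff_subgroup_fg, Subgroup.fg_iff_add_fg]
  haveI : Module.Finite ℤ (Additive A) := Module.Finite.iff_addGroup_fg.mpr inferInstance
  haveI : IsNoetherian ℤ (Additive A) := isNoetherian_of_isNoetherianRing_of_finite ℤ (Additive A)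
  have h := IsNoetherian.noetherian (AddSubgroup.toIntSubmodule (Subgroup.toAddSubgroup H))
  rwa [Submodule.fg_iff_addSubgroup_fg, AddSubgroup.toIntSubmodule_toAddSubgroup] at h

/-- A commutative group generated by finitely many torsion elements is finite. -/
lemma my_finite_of_comm_torsion_gen {A : Type*} [CommGroup A] (S : Set A) (hfin : S.Finite)
    (hclos : Subgroup.closure S = ⊤) (htor : ∀ s ∈ S, IsOfFinOrder s) : Finite A := by
  haveI : Group.FG A := Group.fg_iff.mpr ⟨S, hclos, hfin⟩
  refine CommGroup.finite_of_fg_torsion A ?_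
  intro g
  have hg : g ∈ CommGroup.torsion A := by
    have : Subgroup.closure S ≤ CommGroup.torsion A :=
      (Subgroup.closure_le _).mpr (fun s hs => htor s hs)
    exact this (hclos ▸ Subgroup.mem_top g)
  exact hg

lemma my_comm_center_left (g h z : G) (hz : z ∈ Subgroup.center G) :
    ⁅g * z, h⁆ = ⁅g, h⁆ := by
  have h1 : z * h = h * z := (Subgroup.mem_center_iff.mp hz h).symm
  have e : ⁅g * z, h⁆ = g * (z * h * z⁻¹) * g⁻¹ * h⁻¹ := by
    simp only [commutatorElement_def]; group
  rw [e, h1, mul_inv_cancel_right, commutatorElement_def]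

lemma my_comm_center_right (g h z : G) (hz : z ∈ Subgroup.center G) :
    ⁅g, h * z⁆ = ⁅g, h⁆ := by
  have h1 : z * g⁻¹ = g⁻¹ * z := (Subgroup.mem_center_iff.mp hz g⁻¹).symm
  have e : ⁅g, h * z⁆ = g * h * (z * g⁻¹ * z⁻¹) * h⁻¹ := by
    simp only [commutatorElement_def]; group
  rw [e, h1, mul_inv_cancel_right, commutatorElement_def]

lemma my_commutatorSet_finite [Finite (G ⧸ center G)] : (commutatorSet G).Finite := by
  have hsub : commutatorSet G ⊆
      Set.range (fun p : (G ⧸ center G) × (G ⧸ center G) => ⁅p.1.out, p.2.out⁆) := by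
    rintro x ⟨g, h, rfl⟩
    refine ⟨⟨QuotientGroup.mk g, QuotientGroup.mk h⟩, ?_⟩
    have hg : ((QuotientGroup.mk g : G ⧸ center G).out)⁻¹ * g ∈ center G := by
      have := QuotientGroup.out_eq' (QuotientGroup.mk g : G ⧸ center G)
      rwa [QuotientGroup.eq] at this
    have hh : ((QuotientGroup.mk h : G ⧸ center G).out)⁻¹ * h ∈ center G := by
      have := QuotientGroup.out_eq' (QuotientGroup.mk h : G ⧸ center G)
      rwa [QuotientGroup.eq] at this
    calc ⁅(QuotientGroup.mk g : G ⧸ center G).out, (QuotientGroup.mk h : G ⧸ center G).out⁆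
        = ⁅(QuotientGroup.mk g : G ⧸ center G).out *
            (((QuotientGroup.mk g : G ⧸ center G).out)⁻¹ * g),
            (QuotientGroup.mk h : G ⧸ center G).out⁆ := (my_comm_center_left _ _ _ hg).symm
      _ = ⁅g, (QuotientGroup.mk h : G ⧸ center G).out *
            (((QuotientGroup.mk h : G ⧸ center G).out)⁻¹ * h)⁆ := by
            rw [mul_inv_cancel_left, my_comm_center_right _ _ _ hh]
      _ = ⁅g, h⁆ := by rw [mul_inv_cancel_left]
  exact Set.Finite.subset (Set.finite_range _) hsub

end Helpers
open Subgroup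

universe u

/-- A nilpotent group generated by finitely many torsion elements is finite. -/
lemma my_finite_of_nilpotent_torsion_gen :
    ∀ (n : ℕ) (H : Type u) [Group H] [Group.IsNilpotent H], Group.nilpotencyClass H ≤ n →
      ∀ S : Set H, S.Finite → closure S = ⊤ → (∀ s ∈ S, IsOfFinOrder s) → Finite H := by
  intro n
  induction n with
  | zero =>
    intro H _ _ hcl S _ _ _
    haveI : Subsingleton H := nilpotencyClass_zero_iff_subsingleton.mp (Nat.le_zero.mp hcl)
    infer_instance
  | succ n ih =>
    intro H _ _ hcl S hfin hclos htor
    by_cases hs : Subsingleton H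
    · exact @Finite.of_subsingleton H hs -- maybe wrong name
    haveI : Nontrivial H := not_subsingleton_iff_nontrivial.mp hs
    have hQclass : Group.nilpotencyClass (H ⧸ center H) ≤ n := by
      rw [nilpotencyClass_quotient_center]
      omega
    have hQ : Finite (H ⧸ center H) := by
      refine ih (H ⧸ center H) hQclass ((QuotientGroup.mk' (center H)) '' S)
        (hfin.image _) ?_ ?_
      · rw [← MonoidHom.map_closure, hclos, Subgroup.map_top_of_surjective _
          (QuotientGroup.mk'_surjective _)]
      · rintro _ ⟨s, hs', rfl⟩
        exact MonoidHom.isOfFinOrder _ (htor s hs')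
    haveI : (center H).FiniteIndex := Subgroup.finiteIndex_of_finite_quotient
    haveI : Finite (commutatorSet H) := (my_commutatorSet_finite).to_subtype
    haveI : Finite (commutator H) := inferInstance
    haveI : Finite (Abelianization H) := by
      refine my_finite_of_comm_torsion_gen ((Abelianization.of : H →* Abelianization H) '' S)
        (hfin.image _) ?_ ?_
      · rw [← MonoidHom.map_closure, hclos, Subgroup.map_top_of_surjective]
        exact QuotientGroup.mk_surjective
      · rintro _ ⟨s, hs', rfl⟩
        exact MonoidHom.isOfFinOrder _ (htor s hs')
    have e : H ≃ (H ⧸ commutator H) × (commutator H) := Subgroup.groupEquivQuotientProdSubgroup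
    have : Finite (H ⧸ commutator H) := ‹Finite (Abelianization H)›
    exact Finite.of_equiv _ e.symm
section LCS

variable {G : Type*} [Group G]

lemma my_lcs_succ (n : ℕ) :
    (⊤ : Subgroup G).lowerCentralSeries (n + 1) = ⁅(⊤ : Subgroup G).lowerCentralSeries n, (⊤ : Subgroup G)⁆ := rfl

lemma my_lcs_map_eq {G' : Type*} [Group G'] (f : G →* G') (hf : Function.Surjective f) :
    ∀ n, ((⊤ : Subgroup G).lowerCentralSeries n).map f = (⊤ : Subgroup G').lowerCentralSeries n := by
  intro n
  induction n with
  | zero =>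
    simp only [Subgroup.lowerCentralSeries_zero]
    exact Subgroup.map_top_of_surjective f hf
  | succ n ih =>
    rw [my_lcs_succ, my_lcs_succ, Subgroup.map_commutator, ih,
      Subgroup.map_top_of_surjective f hf]

-- centrality of γ_{i+1} when γ_{i+2} = ⊥
lemma my_central (i : ℕ) (h2 : (⊤ : Subgroup G).lowerCentralSeries (i + 2) = ⊥)
    {u : G} (hu : u ∈ (⊤ : Subgroup G).lowerCentralSeries (i + 1)) (g : G) : u * g = g * u := by
  have : ⁅u, g⁆ ∈ (⊤ : Subgroup G).lowerCentralSeries (i + 2) :=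
    commutator_mem_commutator hu (Subgroup.mem_top g)
  rw [h2, Subgroup.mem_bot, commutatorElement_eq_one_iff_mul_comm] at this
  exact this

lemma my_comm_mul_right (i : ℕ) (h2 : (⊤ : Subgroup G).lowerCentralSeries (i + 2) = ⊥)
    {x : G} (hx : x ∈ (⊤ : Subgroup G).lowerCentralSeries i) (g h : G) :
    ⁅x, g * h⁆ = ⁅x, g⁆ * ⁅x, h⁆ := by
  have hc : ⁅x, h⁆ ∈ (⊤ : Subgroup G).lowerCentralSeries (i + 1) :=
    commutator_mem_commutator hx (Subgroup.mem_top h)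
  have e : ⁅x, g * h⁆ = ⁅x, g⁆ * (g * ⁅x, h⁆ * g⁻¹) := by
    simp only [commutatorElement_def]; group
  rw [e, ← my_central i h2 hc g, mul_inv_cancel_right]

lemma my_comm_mul_left (i : ℕ) (h2 : (⊤ : Subgroup G).lowerCentralSeries (i + 2) = ⊥)
    {x y : G} (hx : x ∈ (⊤ : Subgroup G).lowerCentralSeries i) (hy : y ∈ (⊤ : Subgroup G).lowerCentralSeries i) (g : G) :
    ⁅x * y, g⁆ = ⁅x, g⁆ * ⁅y, g⁆ := by
  have hc : ⁅y, g⁆ ∈ (⊤ : Subgroup G).lowerCentralSeries (i + 1) :=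
    commutator_mem_commutator hy (Subgroup.mem_top g)
  have hc' : ⁅x, g⁆ ∈ (⊤ : Subgroup G).lowerCentralSeries (i + 1) :=
    commutator_mem_commutator hx (Subgroup.mem_top g)
  have e : ⁅x * y, g⁆ = x * ⁅y, g⁆ * x⁻¹ * ⁅x, g⁆ := by
    simp only [commutatorElement_def]; group
  rw [e, ← my_central i h2 hc x, mul_inv_cancel_right, my_central i h2 hc ⁅x, g⁆]

/-- Core lemma: if `γ_{i+2} = ⊥`, `X` generates `γ_i` modulo `γ_{i+1}` and `S` generates `G`,
then the commutators `⁅x, s⁆` generate `γ_{i+1}`. -/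
lemma my_comm_gen (i : ℕ) (h2 : (⊤ : Subgroup G).lowerCentralSeries (i + 2) = ⊥)
    (X S : Set G) (hX : X ⊆ (⊤ : Subgroup G).lowerCentralSeries i)
    (hXc : Subgroup.closure X ⊔ (⊤ : Subgroup G).lowerCentralSeries (i + 1) = (⊤ : Subgroup G).lowerCentralSeries i)
    (hS : Subgroup.closure S = ⊤) :
    (⊤ : Subgroup G).lowerCentralSeries (i + 1) =
      Subgroup.closure (Set.image2 (fun a b => ⁅a, b⁆) X S) := by
  set K := Subgroup.closure (Set.image2 (fun a b => ⁅a, b⁆) X S) with hK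
  -- Step A : for x ∈ X, all commutators ⁅x, g⁆ lie in K
  have stepA : ∀ x ∈ X, ∀ g : G, ⁅x, g⁆ ∈ K := by
    intro x hx g
    let ψ : G →* G :=
      { toFun := fun g => ⁅x, g⁆
        map_one' := by simp
        map_mul' := fun a b => my_comm_mul_right i h2 (hX hx) a b }
    have : Subgroup.closure S ≤ K.comap ψ := by
      refine (Subgroup.closure_le _).mpr ?_
      intro s hs
      exact Subgroup.subset_closure (Set.mem_image2_of_mem hx hs)
    have := this (hS ▸ Subgroup.mem_top g)
    exact this
  -- Step B : for z ∈ γ_i and any g, ⁅z, g⁆ ∈ K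
  have stepB : ∀ g : G, ∀ z ∈ (⊤ : Subgroup G).lowerCentralSeries i, ⁅z, g⁆ ∈ K := by
    intro g
    let W : Subgroup G :=
      { carrier := {z | z ∈ (⊤ : Subgroup G).lowerCentralSeries i ∧ ⁅z, g⁆ ∈ K}
        one_mem' := by simp [Subgroup.one_mem]
        mul_mem' := by
          rintro a b ⟨ha, ha'⟩ ⟨hb, hb'⟩
          exact ⟨mul_mem ha hb, by rw [my_comm_mul_left i h2 ha hb g]; exact mul_mem ha' hb'⟩
        inv_mem' := by
          rintro a ⟨ha, ha'⟩
          refine ⟨inv_mem ha, ?_⟩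
          have : ⁅a * a⁻¹, g⁆ = ⁅a, g⁆ * ⁅a⁻¹, g⁆ :=
            my_comm_mul_left i h2 ha (inv_mem ha) g
          rw [mul_inv_cancel] at this
          simp only [commutatorElement_one_left] at this
          have h' : ⁅a⁻¹, g⁆ = ⁅a, g⁆⁻¹ :=
            eq_inv_of_mul_eq_one_right (by rw [← this])
          rw [h']; exact inv_mem ha'
      }
    intro z hz
    have hle : (⊤ : Subgroup G).lowerCentralSeries i ≤ W := by
      rw [← hXc]
      refine sup_le ?_ ?_
      · refine (Subgroup.closure_le _).mpr ?_
        intro x hx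
        exact ⟨hX hx, stepA x hx g⟩
      · intro u hu
        refine ⟨Subgroup.lowerCentralSeries_antitone (S := ⊤) (Nat.le_succ i) hu, ?_⟩
        have : ⁅u, g⁆ = 1 := by
          rw [← Subgroup.mem_bot, ← h2]
          exact commutator_mem_commutator hu (Subgroup.mem_top g)
        rw [this]; exact Subgroup.one_mem K
    exact (hle hz).2
  refine le_antisymm ?_ ?_
  · rw [my_lcs_succ, Subgroup.commutator_def]
    refine (Subgroup.closure_le _).mpr ?_
    rintro w ⟨p, hp, q, -, rfl⟩
    exact stepB q p hp
  · refine (Subgroup.closure_le _).mpr ?_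
    rintro w ⟨x, hx, s, hs, rfl⟩
    exact commutator_mem_commutator (hX hx) (Subgroup.mem_top s)

end LCS
section FG

variable {G : Type*} [Group G]

lemma my_exists_X (S : Set G) (hS : S.Finite) (hc : Subgroup.closure S = ⊤) :
    ∀ i, ∃ X : Set G, X.Finite ∧ X ⊆ (⊤ : Subgroup G).lowerCentralSeries i ∧
      Subgroup.closure X ⊔ (⊤ : Subgroup G).lowerCentralSeries (i + 1) = (⊤ : Subgroup G).lowerCentralSeries i := by
  intro i
  induction i with
  | zero =>
    exact ⟨S, hS, by simp, by rw [hc]; simp⟩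
  | succ i ihX =>
    obtain ⟨X, hXfin, hXsub, hXc⟩ := ihX
    set N := (⊤ : Subgroup G).lowerCentralSeries (i + 2) with hN
    let Q := G ⧸ N
    let π : G →* Q := QuotientGroup.mk' N
    have hsurj : Function.Surjective π := QuotientGroup.mk'_surjective N
    have hmap : ∀ n, ((⊤ : Subgroup G).lowerCentralSeries n).map π = (⊤ : Subgroup Q).lowerCentralSeries n :=
      my_lcs_map_eq π hsurj
    have h2 : (⊤ : Subgroup Q).lowerCentralSeries (i + 2) = ⊥ := by
      rw [← hmap, Subgroup.map_eq_bot_iff, QuotientGroup.ker_mk']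
    have hX' : (π '' X) ⊆ (⊤ : Subgroup Q).lowerCentralSeries i := by
      rw [← hmap]
      exact Set.image_subset_iff.mpr (fun x hx => Subgroup.mem_map_of_mem π (hXsub hx))
    have hXc' : Subgroup.closure (π '' X) ⊔ (⊤ : Subgroup Q).lowerCentralSeries (i + 1) =
        (⊤ : Subgroup Q).lowerCentralSeries i := by
      rw [← hmap, ← hmap, ← MonoidHom.map_closure, ← Subgroup.map_sup, hXc]
    have hS' : Subgroup.closure (π '' S) = ⊤ := by
      rw [← MonoidHom.map_closure, hc, Subgroup.map_top_of_surjective _ hsurj]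
    have key := my_comm_gen i h2 (π '' X) (π '' S) hX' hXc' hS'
    refine ⟨Set.image2 (fun a b => ⁅a, b⁆) X S, hXfin.image2 _ hS, ?_, ?_⟩
    · rintro w ⟨x, hx, s, hs, rfl⟩
      exact commutator_mem_commutator (hXsub hx) (Subgroup.mem_top s)
    · have himg : π '' (Set.image2 (fun a b => ⁅a, b⁆) X S) =
          Set.image2 (fun a b => ⁅a, b⁆) (π '' X) (π '' S) := by
        rw [Set.image_image2, Set.image2_image_left, Set.image2_image_right]
        simp only [map_commutatorElement]
      have hmapeq : (Subgroup.closure (Set.image2 (fun a b => ⁅a, b⁆) X S)).map π =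
          ((⊤ : Subgroup G).lowerCentralSeries (i + 1)).map π := by
        rw [MonoidHom.map_closure, himg, ← key, hmap]
      have := congrArg (Subgroup.comap π) hmapeq
      rw [Subgroup.comap_map_eq, Subgroup.comap_map_eq, QuotientGroup.ker_mk'] at this
      rw [this]
      exact sup_eq_left.mpr (hN ▸ Subgroup.lowerCentralSeries_antitone (S := ⊤) (Nat.le_succ (i + 1)))
  -- note : N = γ_{i+2}

lemma my_lcs_fg [Group.FG G] (c : ℕ) (hb : (⊤ : Subgroup G).lowerCentralSeries c = ⊥) :
    ∀ i, ((⊤ : Subgroup G).lowerCentralSeries i).FG := by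
  obtain ⟨S, hc, hS⟩ := Group.fg_iff.mp ‹Group.FG G›
  have aux : ∀ k, ((⊤ : Subgroup G).lowerCentralSeries (c - k)).FG := by
    intro k
    induction k with
    | zero =>
      simp only [Nat.sub_zero, hb]
      exact ⟨∅, by simp⟩
    | succ k ih =>
      by_cases hck : c ≤ k
      · have : c - (k + 1) = c - k := by omega
        rw [this]; exact ih
      · have hidx : c - k = (c - (k + 1)) + 1 := by omega
        obtain ⟨X, hXfin, -, hXc⟩ := my_exists_X S hS hc (c - (k + 1))
        obtain ⟨T, hTc⟩ := ih
        refine Subgroup.fg_iff _ |>.mpr ⟨X ∪ ↑T, ?_, hXfin.union T.finite_toSet⟩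
        rw [Subgroup.closure_union, hTc, hidx]
        exact hXc
  intro i
  by_cases hic : i ≤ c
  · have : i = c - (c - i) := by omega
    rw [this]; exact aux (c - i)
  · have : (⊤ : Subgroup G).lowerCentralSeries i = ⊥ := by
      rw [← le_bot_iff, ← hb]
      exact Subgroup.lowerCentralSeries_antitone (S := ⊤) (by omega)
    rw [this]
    exact ⟨∅, by simp⟩

end FG
section Torsion

variable {G : Type u} [Group G]

lemma my_mul_torsion [Group.IsNilpotent G] {x y : G}
    (hx : IsOfFinOrder x) (hy : IsOfFinOrder y) : IsOfFinOrder (x * y) := by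
  set K := Subgroup.closure ({x, y} : Set G) with hKdef
  have hxK : x ∈ K := Subgroup.subset_closure (by simp)
  have hyK : y ∈ K := Subgroup.subset_closure (by simp)
  haveI : Finite ↥K := by
    refine my_finite_of_nilpotent_torsion_gen (Group.nilpotencyClass ↥K) ↥K le_rfl
      (Subtype.val ⁻¹' ({x, y} : Set G)) ?_ ?_ ?_
    · exact Set.Finite.preimage Subtype.val_injective.injOn (by simp)
    · apply Subgroup.map_injective (Subgroup.subtype_injective K)
      rw [MonoidHom.map_closure, ← MonoidHom.range_eq_map, Subgroup.range_subtype]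
      have himg : (Subgroup.subtype K) '' (Subtype.val ⁻¹' ({x, y} : Set G)) =
          ({x, y} : Set G) := by
        have : ({x, y} : Set G) ⊆ ↑K := by
          rintro a (rfl | rfl)
          · exact hxK
          · simp_all
        rw [Subgroup.coe_subtype]
        refine Set.image_preimage_eq_of_subset ?_
        rwa [Subtype.range_coe]
      rw [himg, hKdef]
    · intro s hs
      have : IsOfFinOrder (Subgroup.subtype K s) := by
        rcases hs with h | h
        · rw [show (Subgroup.subtype K) s = x from h]; exact hx
        · rw [show (Subgroup.subtype K) s = y from h]; exact hy
      exact (Subgroup.subtype_injective K).isOfFinOrder_iff.mp this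
  have : IsOfFinOrder (⟨x * y, mul_mem hxK hyK⟩ : ↥K) := isOfFinOrder_of_finite _
  exact MonoidHom.isOfFinOrder (Subgroup.subtype K) this

/-- The torsion subgroup of a nilpotent group. -/
def myTorsion (G : Type u) [Group G] [Group.IsNilpotent G] : Subgroup G where
  carrier := {g : G | IsOfFinOrder g}
  one_mem' := IsOfFinOrder.one
  mul_mem' := fun h h' => my_mul_torsion h h'
  inv_mem' := fun h => h.inv

lemma my_mem_myTorsion_iff {G : Type u} [Group G] [Group.IsNilpotent G] {g : G} :
    g ∈ myTorsion G ↔ IsOfFinOrder g := Iff.rfl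

lemma my_torsion_finite :
    ∀ (c : ℕ) (G : Type u) [Group G], Group.FG G →
      (⊤ : Subgroup G).lowerCentralSeries c = ⊥ → {g : G | IsOfFinOrder g}.Finite := by
  intro c
  induction c with
  | zero =>
    intro G _ _ hb
    rw [Subgroup.lowerCentralSeries_zero] at hb
    haveI : Subsingleton G := by
      constructor
      intro a b
      have ha : a ∈ (⊥ : Subgroup G) := hb ▸ Subgroup.mem_top a
      have hbb : b ∈ (⊥ : Subgroup G) := hb ▸ Subgroup.mem_top b
      rw [Subgroup.mem_bot] at ha hbb
      rw [ha, hbb]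
    exact Set.toFinite _
  | succ c ih =>
    intro G _ hfg hb
    haveI := hfg
    haveI : Group.IsNilpotent G := Subgroup.nilpotent_iff_lowerCentralSeries.mpr ⟨c + 1, hb⟩
    set Z := (⊤ : Subgroup G).lowerCentralSeries c with hZ
    have hZcentral : ∀ z ∈ Z, ∀ g : G, z * g = g * z := by
      intro z hz g
      have h1 : ⁅z, g⁆ ∈ (⊤ : Subgroup G).lowerCentralSeries (c + 1) :=
        commutator_mem_commutator hz (Subgroup.mem_top g)
      rw [hb, Subgroup.mem_bot, commutatorElement_eq_one_iff_mul_comm] at h1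
      exact h1
    have hZfg : ((⊤ : Subgroup G).lowerCentralSeries c).FG := my_lcs_fg (c + 1) hb c
    haveI : Group.FG ↥Z := (Group.fg_iff_subgroup_fg _).mpr hZfg
    letI : CommGroup ↥Z :=
      { (inferInstance : Group ↥Z) with
        mul_comm := fun a b => Subtype.ext (hZcentral a a.2 b) }
    have htorZfin : {z : ↥Z | IsOfFinOrder z}.Finite := by
      set t := CommGroup.torsion ↥Z with ht
      haveI : Group.FG ↥t := my_subgroup_fg_of_comm_fg t
      haveI : Finite ↥t := by
        refine CommGroup.finite_of_fg_torsion ↥t ?_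
        intro a
        exact (Subgroup.subtype_injective t).isOfFinOrder_iff.mp (a.2 : IsOfFinOrder (a : ↥Z))
      have heq : {z : ↥Z | IsOfFinOrder z} = (t : Set ↥Z) := rfl
      rw [heq]
      exact Set.toFinite _
    let Q := G ⧸ Z
    haveI : Group.FG Q := inferInstance
    have hbQ : (⊤ : Subgroup Q).lowerCentralSeries c = ⊥ := by
      rw [← my_lcs_map_eq (QuotientGroup.mk' Z) (QuotientGroup.mk'_surjective Z) c, ← hZ,
        Subgroup.map_eq_bot_iff, QuotientGroup.ker_mk']
    have hQfin : {q : Q | IsOfFinOrder q}.Finite := ih Q inferInstance hbQ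
    set T := myTorsion G with hT
    let φ : ↥T →* Q := (QuotientGroup.mk' Z).comp T.subtype
    have hrange : (Set.range φ).Finite := by
      refine hQfin.subset ?_
      rintro _ ⟨a, rfl⟩
      exact MonoidHom.isOfFinOrder (QuotientGroup.mk' Z) (my_mem_myTorsion_iff.mp a.2)
    haveI : Finite ↥φ.range :=
      Set.Finite.to_subtype (by rw [MonoidHom.coe_range]; exact hrange)
    haveI : Finite ↥φ.ker := by
      haveI := htorZfin.to_subtype
      refine Finite.of_injective
        (fun k => (⟨⟨((k : ↥T) : G), (QuotientGroup.eq_one_iff _).mp (k.2 : φ (k : ↥T) = 1)⟩,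
          (Subgroup.subtype_injective Z).isOfFinOrder_iff.mp
            (my_mem_myTorsion_iff.mp (k : ↥T).2)⟩ :
            {z : ↥Z | IsOfFinOrder z})) ?_
      intro a b hab
      have h1 : ((a : ↥T) : G) = ((b : ↥T) : G) := by
        simpa using congrArg (fun z => ((z : ↥Z) : G)) (congrArg Subtype.val hab)
      exact Subtype.ext (Subtype.ext h1)
    haveI : Finite (↥T ⧸ φ.ker) :=
      Finite.of_equiv _ (QuotientGroup.quotientKerEquivRange φ).toEquiv.symm
    haveI : Finite ↥T :=
      Finite.of_equiv _ (Subgroup.groupEquivQuotientProdSubgroup (s := φ.ker)).symm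
    have : {g : G | IsOfFinOrder g} = (T : Set G) := rfl
    rw [this]
    exact Set.toFinite _

end Torsion

/-- In a finitely generated nilpotent group, the torsion elements form a finite
subgroup. -/
theorem torsion_of_fg_nilpotent_is_finite_subgroup
    (G : Type) [Group G] (hfg : Group.FG G) (hnil : Group.IsNilpotent G) :
    ∃ H : Subgroup G, (H : Set G) = {g : G | IsOfFinOrder g} ∧ (H : Set G).Finite := by
  obtain ⟨c, hb⟩ := Subgroup.nilpotent_iff_lowerCentralSeries.mp hnil
  refine ⟨myTorsion G, rfl, ?_⟩
  exact my_torsion_finite c G hfg hb
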